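/- Let φ be a rational map admitting a holomorphic automorphism of the form V(w) = β/w with |β| ≠ 1, and admitting the imaginary reflection τ(w) = -1/conj(w) as an antiholomorphic automorphism. Then (τ ∘ V)² is a Möbius transformation of infinite order commuting with φ; hence no rational map of degree ≥ 2 admits both. -/

import Mathlib

open OnePoint Complex Polynomial

/-- The Möbius transformation determined by the matrix `[[a,b],[c,d]]`,
acting on the Riemann sphere `OnePoint ℂ`. -/
noncomputable def moeb (a b c d : ℂ) (p : OnePoint ℂ) : OnePoint ℂ :=
  OnePoint.elim p (if c = 0 then ∞ else ((a / c : ℂ) : OnePoint ℂ))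
    (fun z => if c * z + d = 0 then ∞ else (((a * z + b) / (c * z + d) : ℂ) : OnePoint ℂ))

/-- Complex conjugation extended to the Riemann sphere. -/
noncomputable def sphConj (p : OnePoint ℂ) : OnePoint ℂ :=
  OnePoint.elim p ∞ (fun z => ((starRingEnd ℂ) z : OnePoint ℂ))

/-- The imaginary reflection `τ(z) = -1/conj z` on the Riemann sphere. -/
noncomputable def tauSph (p : OnePoint ℂ) : OnePoint ℂ :=
  moeb 0 (-1) 1 0 (sphConj p)

/-- The rational map on the Riemann sphere determined by a quotient `P/Q`
of (coprime) polynomials. -/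
noncomputable def ratMap (P Q : Polynomial ℂ) (p : OnePoint ℂ) : OnePoint ℂ :=
  OnePoint.elim p
    (if Q.degree < P.degree then ∞
     else ((P.coeff Q.natDegree / Q.leadingCoeff : ℂ) : OnePoint ℂ))
    (fun z => if Q.eval z = 0 then ∞ else ((P.eval z / Q.eval z : ℂ) : OnePoint ℂ))

/- ### Auxiliary lemmas -/

lemma SphAux.elim_coe' {Y : Type*} (x : ℂ) (y : Y) (f : ℂ → Y) :
    OnePoint.elim (x : OnePoint ℂ) y f = f x := rfl

lemma SphAux.elim_infty' {Y : Type*} (y : Y) (f : ℂ → Y) :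
    OnePoint.elim (∞ : OnePoint ℂ) y f = y := rfl

open SphAux

lemma SphAux.V_coe (β z : ℂ) (hz : z ≠ 0) :
    moeb 0 β 1 0 (z : OnePoint ℂ) = ((β / z : ℂ) : OnePoint ℂ) := by
  simp [moeb, elim_coe', hz]

lemma SphAux.V_zero (β : ℂ) : moeb 0 β 1 0 ((0 : ℂ) : OnePoint ℂ) = ∞ := by
  simp [moeb, elim_coe']

lemma SphAux.V_infty (β : ℂ) : moeb 0 β 1 0 ∞ = ((0 : ℂ) : OnePoint ℂ) := by
  simp [moeb, elim_infty']

lemma SphAux.tau_coe (z : ℂ) (hz : z ≠ 0) :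
    tauSph (z : OnePoint ℂ) = ((-1 / (starRingEnd ℂ) z : ℂ) : OnePoint ℂ) := by
  have hz' : (starRingEnd ℂ) z ≠ 0 := by simpa using hz
  simp [tauSph, sphConj, moeb, elim_coe', hz']

lemma SphAux.tau_zero : tauSph ((0 : ℂ) : OnePoint ℂ) = ∞ := by
  simp [tauSph, sphConj, moeb, elim_coe']

lemma SphAux.tau_infty : tauSph ∞ = ((0 : ℂ) : OnePoint ℂ) := by
  simp [tauSph, sphConj, moeb, elim_infty', elim_coe']

lemma SphAux.scale_coe (c z : ℂ) (hc : c ≠ 0) :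
    moeb 1 0 0 c (z : OnePoint ℂ) = ((z / c : ℂ) : OnePoint ℂ) := by
  simp [moeb, elim_coe', hc]

lemma SphAux.scale_infty (c : ℂ) : moeb 1 0 0 c ∞ = ∞ := by
  simp [moeb, elim_infty']

lemma SphAux.ratMap_coe (P Q : Polynomial ℂ) (z : ℂ) :
    ratMap P Q (z : OnePoint ℂ)
      = if Q.eval z = 0 then ∞ else ((P.eval z / Q.eval z : ℂ) : OnePoint ℂ) := rfl

/-- Part 1: `(τ ∘ V)²` is the scaling by `1/(β conj β)`. -/
lemma SphAux.part1 (β : ℂ) (hβ0 : β ≠ 0) :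
    ∀ p, tauSph (moeb 0 β 1 0 (tauSph (moeb 0 β 1 0 p)))
        = moeb 1 0 0 (β * (starRingEnd ℂ) β) p := by
  intro p
  have hβ' : (starRingEnd ℂ) β ≠ 0 := by simpa using hβ0
  have hc : β * (starRingEnd ℂ) β ≠ 0 := mul_ne_zero hβ0 hβ'
  cases p with
  | infty => rw [V_infty, tau_zero, V_infty, tau_zero, scale_infty]
  | coe z =>
    rcases eq_or_ne z 0 with rfl | hz
    · rw [V_zero, tau_infty, V_zero, tau_infty, scale_coe _ _ hc, zero_div]
    · have hz' : (starRingEnd ℂ) z ≠ 0 := by simpa using hz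
      rw [V_coe _ _ hz, tau_coe _ (div_ne_zero hβ0 hz)]
      have e1 : -1 / (starRingEnd ℂ) (β / z) = -((starRingEnd ℂ) z / (starRingEnd ℂ) β) := by
        rw [map_div₀]; field_simp
      rw [e1]
      have h3 : -((starRingEnd ℂ) z / (starRingEnd ℂ) β) ≠ 0 := by simp [hz', hβ']
      rw [V_coe _ _ h3]
      have e2 : β / -((starRingEnd ℂ) z / (starRingEnd ℂ) β)
          = -(β * (starRingEnd ℂ) β) / (starRingEnd ℂ) z := by
        field_simp
      rw [e2]
      have h4 : -(β * (starRingEnd ℂ) β) / (starRingEnd ℂ) z ≠ 0 := by simp [hz', hβ0, hβ']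
      rw [tau_coe _ h4, scale_coe _ _ hc]
      congr 1
      rw [map_div₀, map_neg, map_mul, Complex.conj_conj, Complex.conj_conj]
      field_simp

/-- Injectivity of `k ↦ c^k` for `c = β conj β`, `|β| ∉ {0,1}`. -/
lemma SphAux.pow_inj (β : ℂ) (hβ0 : β ≠ 0) (hβ : ‖β‖ ≠ 1) :
    ∀ a b : ℕ, (β * (starRingEnd ℂ) β) ^ a = (β * (starRingEnd ℂ) β) ^ b → a = b := by
  intro a b h
  set r : ℝ := Complex.normSq β with hr
  have hc : β * (starRingEnd ℂ) β = ((r : ℝ) : ℂ) := Complex.mul_conj β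
  have hrpos : 0 < r := Complex.normSq_pos.mpr hβ0
  have hr1 : r ≠ 1 := by
    intro h1
    apply hβ
    have : ‖β‖ ^ 2 = 1 := by rw [Complex.sq_norm]; exact h1
    nlinarith [norm_nonneg β]
  rw [hc] at h
  have h' : r ^ a = r ^ b := by exact_mod_cast h
  have hl : Real.log r ≠ 0 := Real.log_ne_zero_of_pos_of_ne_one hrpos hr1
  have := congrArg Real.log h'
  rw [Real.log_pow, Real.log_pow] at this
  exact_mod_cast mul_right_cancel₀ hl this

lemma SphAux.coeff_comp_CX (p : Polynomial ℂ) (r : ℂ) (k : ℕ) :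
    (p.comp (C r * X)).coeff k = p.coeff k * r ^ k := by
  induction p using Polynomial.induction_on' with
  | add p q hp hq => simp [add_comp, hp, hq, add_mul]
  | monomial n a =>
    rw [monomial_comp, mul_pow, ← C_pow, ← mul_assoc, ← C_mul, coeff_C_mul, coeff_X_pow,
      coeff_monomial]
    rcases eq_or_ne k n with rfl | hkn
    · simp
    · simp [hkn, Ne.symm hkn]

/-- The key algebraic contradiction. -/
lemma SphAux.key_alg (d : ℕ) (hd : 2 ≤ d) (P Qp : Polynomial ℂ) (hcop : IsCoprime P Qp)
    (hdeg : max P.natDegree Qp.natDegree = d)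
    (c : ℂ) (hc0 : c ≠ 0) (hcinj : ∀ a b : ℕ, c ^ a = c ^ b → a = b)
    (heval : ∀ z : ℂ, P.eval z * Qp.eval (c⁻¹ * z) = c * (P.eval (c⁻¹ * z) * Qp.eval z)) :
    False := by
  have hP0 : P ≠ 0 := by
    rintro rfl
    have : IsUnit Qp := isCoprime_zero_left.mp hcop
    have := natDegree_eq_zero_of_isUnit this
    rw [Polynomial.natDegree_zero] at hdeg
    omega
  have hQ0 : Qp ≠ 0 := by
    rintro rfl
    have : IsUnit P := isCoprime_zero_right.mp hcop
    have := natDegree_eq_zero_of_isUnit this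
    rw [Polynomial.natDegree_zero] at hdeg
    omega
  set A := P.comp (C c⁻¹ * X) with hA
  set B := Qp.comp (C c⁻¹ * X) with hB
  have hid : P * B = C c * (A * Qp) := by
    apply Polynomial.funext
    intro z
    simp only [eval_mul, eval_C, eval_comp, eval_X, hA, hB]
    exact heval z
  have hA0 : A ≠ 0 := by
    intro h
    apply hP0
    apply Polynomial.funext
    intro z
    have := congrArg (fun q => Polynomial.eval (c * z) q) h
    simp only [hA, eval_comp, eval_mul, eval_C, eval_X, eval_zero] at this
    rw [inv_mul_cancel_left₀ hc0] at this
    simpa using this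
  have hB0 : B ≠ 0 := by
    intro h
    apply hQ0
    apply Polynomial.funext
    intro z
    have := congrArg (fun q => Polynomial.eval (c * z) q) h
    simp only [hB, eval_comp, eval_mul, eval_C, eval_X, eval_zero] at this
    rw [inv_mul_cancel_left₀ hc0] at this
    simpa using this
  have hPA : P ∣ A := by
    have h1 : P ∣ (C c * A) * Qp := by
      rw [mul_assoc, ← hid]; exact Dvd.intro B rfl
    have h2 : P ∣ C c * A := hcop.dvd_of_dvd_mul_right h1
    have hu : IsUnit (C c) := isUnit_C.mpr hc0.isUnit
    exact (IsUnit.dvd_mul_left hu).mp h2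
  have hQB : Qp ∣ B := by
    have h1 : Qp ∣ P * B := by
      rw [hid]; exact ⟨C c * A, by ring⟩
    exact hcop.symm.dvd_of_dvd_mul_left h1
  have hdegA : A.natDegree = P.natDegree := by
    rw [hA, natDegree_comp, natDegree_C_mul_X c⁻¹ (inv_ne_zero hc0), mul_one]
  have hdegB : B.natDegree = Qp.natDegree := by
    rw [hB, natDegree_comp, natDegree_C_mul_X c⁻¹ (inv_ne_zero hc0), mul_one]
  obtain ⟨u, hu⟩ := hPA
  have hu0 : u ≠ 0 := by rintro rfl; simp at hu; exact hA0 hu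
  have hudeg : u.natDegree = 0 := by
    have := hdegA
    rw [hu, natDegree_mul hP0 hu0] at this
    omega
  obtain ⟨v, hv⟩ := hQB
  have hv0 : v ≠ 0 := by rintro rfl; simp at hv; exact hB0 hv
  have hvdeg : v.natDegree = 0 := by
    have := hdegB
    rw [hv, natDegree_mul hQ0 hv0] at this
    omega
  set lam := u.coeff 0 with hlam
  set mu := v.coeff 0 with hmu
  have hulam : u = C lam := eq_C_of_natDegree_eq_zero hudeg
  have hvmu : v = C mu := eq_C_of_natDegree_eq_zero hvdeg
  have hcoefP : ∀ k, P.coeff k * (c⁻¹) ^ k = P.coeff k * lam := by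
    intro k
    have := congrArg (fun q => Polynomial.coeff q k) hu
    simp only [hA] at this ⊢
    rw [coeff_comp_CX] at this
    rw [this, hulam, coeff_mul_C]
  have hcoefQ : ∀ k, Qp.coeff k * (c⁻¹) ^ k = Qp.coeff k * mu := by
    intro k
    have := congrArg (fun q => Polynomial.coeff q k) hv
    simp only [hB] at this ⊢
    rw [coeff_comp_CX] at this
    rw [this, hvmu, coeff_mul_C]
  set m := P.natDegree with hm
  set n := Qp.natDegree with hn
  have hlamval : (c⁻¹) ^ m = lam := by
    have := hcoefP m
    exact mul_left_cancel₀ (by simpa [hm] using (leadingCoeff_ne_zero.mpr hP0)) this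
  have hmuval : (c⁻¹) ^ n = mu := by
    have := hcoefQ n
    exact mul_left_cancel₀ (by simpa [hn] using (leadingCoeff_ne_zero.mpr hQ0)) this
  have hcinj' : ∀ a b : ℕ, (c⁻¹) ^ a = (c⁻¹) ^ b → a = b := by
    intro a b h
    apply hcinj
    rw [inv_pow, inv_pow] at h
    exact inv_injective h
  have hPcoeff : ∀ k, k ≠ m → P.coeff k = 0 := by
    intro k hk
    by_contra hne
    exact hk (hcinj' k m (mul_left_cancel₀ hne ((hcoefP k).trans (hlamval ▸ rfl))))
  have hQcoeff : ∀ k, k ≠ n → Qp.coeff k = 0 := by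
    intro k hk
    by_contra hne
    exact hk (hcinj' k n (mul_left_cancel₀ hne ((hcoefQ k).trans (hmuval ▸ rfl))))
  have hmul : mu = c * lam := by
    have h2 : P * (Qp * C mu) = C c * (P * C lam * Qp) := by
      rw [← hvmu, ← hv, ← hulam, ← hu, hid]
    have h3 : (P * Qp) * C mu = (P * Qp) * C (c * lam) := by
      rw [C_mul]; ring_nf; ring_nf at h2; linear_combination h2
    have := mul_left_cancel₀ (mul_ne_zero hP0 hQ0) h3
    exact C_injective this
  have hmn : m = n + 1 := by
    apply hcinj'
    have hrel : c⁻¹ ^ n = c * c⁻¹ ^ m := by rw [hlamval, hmuval]; exact hmul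
    rw [pow_succ, hrel]
    field_simp
  have hn0 : n = 0 := by
    by_contra h
    have hXP : X ∣ P := X_dvd_iff.mpr (hPcoeff 0 (by omega))
    have hXQ : X ∣ Qp := X_dvd_iff.mpr (hQcoeff 0 (by omega))
    exact Polynomial.not_isUnit_X (hcop.isUnit_of_dvd' hXP hXQ)
  omega

/-- if `φ` of degree `≥ 2` admitted both `V(w) = β/w` (`|β| ≠ 1`)
and the imaginary reflection `τ` as automorphisms, then `(τ∘V)²` would be a
Möbius transformation of infinite order commuting with `φ`; this is impossible. -/
theorem no_loxodromic_automorphism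
    (d : ℕ) (hd : 2 ≤ d) (P Qp : Polynomial ℂ) (hcop : IsCoprime P Qp)
    (hdeg : max P.natDegree Qp.natDegree = d)
    (β : ℂ) (hβ0 : β ≠ 0) (hβ : ‖β‖ ≠ 1)
    (hV : ∀ p, moeb 0 β 1 0 (ratMap P Qp p) = ratMap P Qp (moeb 0 β 1 0 p))
    (hτ : ∀ p, tauSph (ratMap P Qp p) = ratMap P Qp (tauSph p)) :
    (∀ p, tauSph (moeb 0 β 1 0 (tauSph (moeb 0 β 1 0 p)))
        = moeb 1 0 0 (β * (starRingEnd ℂ) β) p)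
    ∧ (∀ m : ℕ, 0 < m → (fun p => moeb 1 0 0 (β * (starRingEnd ℂ) β) p)^[m] ≠ id)
    ∧ (∀ p, moeb 1 0 0 (β * (starRingEnd ℂ) β) (ratMap P Qp p)
        = ratMap P Qp (moeb 1 0 0 (β * (starRingEnd ℂ) β) p))
    ∧ False := by
  set c : ℂ := β * (starRingEnd ℂ) β with hcdef
  have hβ' : (starRingEnd ℂ) β ≠ 0 := by simpa using hβ0
  have hc0 : c ≠ 0 := mul_ne_zero hβ0 hβ'
  have hcinj := SphAux.pow_inj β hβ0 hβ
  -- part 2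
  have part2 : ∀ m : ℕ, 0 < m → (fun p => moeb 1 0 0 c p)^[m] ≠ id := by
    intro m hm hid
    have hiter : ∀ k : ℕ, (fun p => moeb 1 0 0 c p)^[k] (((1 : ℂ)) : OnePoint ℂ)
        = (((c⁻¹ ^ k : ℂ)) : OnePoint ℂ) := by
      intro k
      induction k with
      | zero => simp
      | succ k ih =>
        rw [Function.iterate_succ_apply', ih, SphAux.scale_coe _ _ hc0]
        norm_num [pow_succ, div_eq_mul_inv]
    have h1 := hiter m
    rw [hid] at h1
    simp only [id_eq] at h1
    have h2 : (1 : ℂ) = c⁻¹ ^ m := OnePoint.coe_eq_coe.mp h1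
    have h3 : c ^ m = c ^ 0 := by
      rw [pow_zero]
      have := congrArg (fun w => w * c ^ m) h2
      simp only [one_mul, inv_pow] at this
      rw [inv_mul_cancel₀ (pow_ne_zero m hc0)] at this
      exact this
    exact absurd (hcinj m 0 h3) hm.ne'
  -- part 3
  have part1 := SphAux.part1 β hβ0
  have part3 : ∀ p, moeb 1 0 0 c (ratMap P Qp p) = ratMap P Qp (moeb 1 0 0 c p) := by
    intro p
    rw [← part1 (ratMap P Qp p), hV, hτ, hV, hτ, part1 p]
  refine ⟨part1, part2, part3, ?_⟩
  -- derive the evaluation identity and conclude by key_alg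
  have heval : ∀ z : ℂ, P.eval z * Qp.eval (c⁻¹ * z) = c * (P.eval (c⁻¹ * z) * Qp.eval z) := by
    intro z
    have h := part3 ((z : OnePoint ℂ))
    rw [SphAux.scale_coe _ _ hc0, SphAux.ratMap_coe, SphAux.ratMap_coe] at h
    have hzc : c⁻¹ * z = z / c := by rw [inv_mul_eq_div]
    by_cases hQz : Qp.eval z = 0
    · rw [if_pos hQz, SphAux.scale_infty] at h
      have hQzc : Qp.eval (z / c) = 0 := by
        by_contra hne
        rw [if_neg hne] at h
        exact (OnePoint.infty_ne_coe _) h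
      rw [hzc, hQz, hQzc]
      ring
    · rw [if_neg hQz, SphAux.scale_coe _ _ hc0] at h
      by_cases hQzc : Qp.eval (z / c) = 0
      · rw [if_pos hQzc] at h
        exact absurd h (OnePoint.coe_ne_infty _)
      · rw [if_neg hQzc] at h
        have h2 : P.eval z / Qp.eval z / c = P.eval (z / c) / Qp.eval (z / c) :=
          OnePoint.coe_eq_coe.mp h
        rw [hzc]
        field_simp at h2
        linear_combination h2
  exact SphAux.key_alg d hd P Qp hcop hdeg c hc0 hcinj heval
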